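/- Let Q₁ := −e₁₄−e₂₃+2e₅₇, Q₂ := −e₁₃+e₂₄+2e₆₇, Q₃ := e₁₂+e₃₄−2e₅₆ (the generators of the subalgebra su_c(2) ⊂ g₂, the centralizer of su(2)). Then the set of spinors ψ ∈ ℝ⁸ with σ(Q₁)ψ = σ(Q₂)ψ = σ(Q₃)ψ = 0 equals ℝ·ψ₁, i.e. su_c(2) preserves only the one spinor ψ₁ (up to scale). -/

import Mathlib

open Matrix BigOperators

noncomputable section

abbrev M8 : Type := Matrix (Fin 8) (Fin 8) ℝ

/-- 2-forms on ℝ⁷ -/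
abbrev Lam2 : Type := AlternatingMap ℝ (Fin 7 → ℝ) ℝ (Fin 2)

/-- 3-forms on ℝ⁷ -/
abbrev Lam3 : Type := AlternatingMap ℝ (Fin 7 → ℝ) ℝ (Fin 3)

/-- standard basis of ℝ⁷ -/
def u (i : Fin 7) : Fin 7 → ℝ := Pi.single i 1

/-- standard spinor basis ψ₁,…,ψ₈ (0-indexed) -/
def ψ (k : Fin 8) : Fin 8 → ℝ := Pi.single k 1

/-- E_{ij} : ψ_i ↦ ψ_j, ψ_j ↦ -ψ_i -/
def EE (i j : Fin 8) : M8 := Matrix.single j i 1 - Matrix.single i j 1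

/-- Clifford multiplication by e₁,…,e₇ (0-indexed) -/
def e : Fin 7 → M8 :=
  ![EE 0 7 + EE 1 6 - EE 2 5 - EE 3 4,
    -EE 0 6 + EE 1 7 + EE 2 4 - EE 3 5,
    -EE 0 5 + EE 1 4 - EE 2 7 + EE 3 6,
    -EE 0 4 - EE 1 5 - EE 2 6 - EE 3 7,
    -EE 0 2 - EE 1 3 + EE 4 6 + EE 5 7,
    EE 0 3 - EE 1 2 - EE 4 7 + EE 5 6,
    EE 0 1 - EE 2 3 - EE 4 5 + EE 6 7]

def pick2 (i j : Fin 7) : (Fin 7 → ℝ) →ₗ[ℝ] (Fin 2 → ℝ) :=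
  LinearMap.pi fun m => LinearMap.proj (![i, j] m)

def pick3 (i j k : Fin 7) : (Fin 7 → ℝ) →ₗ[ℝ] (Fin 3 → ℝ) :=
  LinearMap.pi fun m => LinearMap.proj (![i, j, k] m)

/-- the 2-form e_i ∧ e_j -/
def w2 (i j : Fin 7) : Lam2 :=
  (Matrix.detRowAlternating : AlternatingMap ℝ (Fin 2 → ℝ) ℝ (Fin 2)).compLinearMap (pick2 i j)

/-- the 3-form e_i ∧ e_j ∧ e_k -/
def w3 (i j k : Fin 7) : Lam3 :=
  (Matrix.detRowAlternating : AlternatingMap ℝ (Fin 3 → ℝ) ℝ (Fin 3)).compLinearMap (pick3 i j k)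

/-- Clifford action of a 2-form -/
def σ2 (ω : Lam2) : M8 :=
  ∑ i : Fin 7, ∑ j : Fin 7, if i < j then ω ![u i, u j] • (e i * e j) else 0

/-- Clifford action of a 3-form -/
def σ3 (T : Lam3) : M8 :=
  ∑ i : Fin 7, ∑ j : Fin 7, ∑ k : Fin 7,
    if i < j ∧ j < k then T ![u i, u j, u k] • (e i * e j * e k) else 0

/-- the skew-symmetric 7×7 matrix A_ω associated to a 2-form ω -/
def A2 (ω : Lam2) : Matrix (Fin 7) (Fin 7) ℝ :=
  ∑ i : Fin 7, ∑ j : Fin 7,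
    if i < j then ω ![u i, u j] •
      (Matrix.single j i (1 : ℝ) - Matrix.single i j 1) else 0

/-- T is ω-invariant: the natural action of the 2-form ω on the 3-form T vanishes -/
def inv3 (ω : Lam2) (T : Lam3) : Prop :=
  ∀ X Y Z : Fin 7 → ℝ,
    T ![A2 ω *ᵥ X, Y, Z] + T ![X, A2 ω *ᵥ Y, Z] + T ![X, Y, A2 ω *ᵥ Z] = 0

/-- the standard G₂ 3-form φ = e₁₂₇+e₁₃₅−e₁₄₆−e₂₃₆−e₂₄₅+e₃₄₇+e₅₆₇ -/
def φf : Lam3 :=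
  w3 0 1 6 + w3 0 2 4 - w3 0 3 5 - w3 1 2 5 - w3 1 3 4 + w3 2 3 6 + w3 4 5 6

def Q1f : Lam2 := -w2 0 3 - w2 1 2 + (2:ℝ) • w2 4 6
def Q2f : Lam2 := -w2 0 2 + w2 1 3 + (2:ℝ) • w2 5 6
def Q3f : Lam2 := w2 0 1 + w2 2 3 - (2:ℝ) • w2 4 5

lemma w2_apply' (i j : Fin 7) (x y : Fin 7 → ℝ) :
    w2 i j ![x, y] = x i * y j - x j * y i := by
  have h : w2 i j ![x, y]
      = Matrix.det (Matrix.of fun m k => (![x, y] m) (![i, j] k)) := rfl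
  rw [h, Matrix.det_fin_two]; simp

lemma w2_u (i j a b : Fin 7) :
    w2 i j ![u a, u b]
      = (if i = a then 1 else 0) * (if j = b then 1 else 0)
        - (if j = a then 1 else 0) * (if i = b then 1 else 0) := by
  rw [w2_apply']; simp [u, Pi.single_apply]

set_option maxHeartbeats 1000000 in
lemma hQ1' : σ2 Q1f = -(e 0 * e 3) - e 1 * e 2 + (2:ℝ) • (e 4 * e 6) := by
  simp only [σ2, Q1f, AlternatingMap.sub_apply, AlternatingMap.neg_apply,
    AlternatingMap.add_apply, AlternatingMap.smul_apply, w2_u,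
    Fin.sum_univ_succ, Fin.sum_univ_zero]
  simp (config := { decide := true })
  show -(e 0 * e 3) + (-(e 1 * e 2) + (2:ℝ) • (e 4 * e 6)) = _
  abel

set_option maxHeartbeats 1000000 in
lemma hQ2' : σ2 Q2f = -(e 0 * e 2) + e 1 * e 3 + (2:ℝ) • (e 5 * e 6) := by
  simp only [σ2, Q2f, AlternatingMap.sub_apply, AlternatingMap.neg_apply,
    AlternatingMap.add_apply, AlternatingMap.smul_apply, w2_u,
    Fin.sum_univ_succ, Fin.sum_univ_zero]
  simp (config := { decide := true })
  show -(e 0 * e 2) + (e 1 * e 3 + (2:ℝ) • (e 5 * e 6)) = _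
  abel

set_option maxHeartbeats 1000000 in
lemma hQ3' : σ2 Q3f = e 0 * e 1 + e 2 * e 3 - (2:ℝ) • (e 4 * e 5) := by
  simp only [σ2, Q3f, AlternatingMap.sub_apply, AlternatingMap.neg_apply,
    AlternatingMap.add_apply, AlternatingMap.smul_apply, w2_u,
    Fin.sum_univ_succ, Fin.sum_univ_zero]
  simp (config := { decide := true })
  show e 0 * e 1 + (e 2 * e 3 - (2:ℝ) • (e 4 * e 5)) = _
  abel


lemma sum_boole_mul8 (P : Prop) [Decidable P] (i : Fin 8) (v : Fin 8 → ℝ) :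
    ∑ x : Fin 8, (if P ∧ i = x then 1 else 0) * v x = if P then v i else 0 := by
  split_ifs with h <;> simp [h, Finset.sum_ite_eq]

section vecEval
variable {α : Type*} (a b c d e' f g h : α)
@[simp] lemma vec8_0 : ![a,b,c,d,e',f,g,h] 0 = a := rfl
@[simp] lemma vec8_1 : ![a,b,c,d,e',f,g,h] 1 = b := rfl
@[simp] lemma vec8_2 : ![a,b,c,d,e',f,g,h] 2 = c := rfl
@[simp] lemma vec8_3 : ![a,b,c,d,e',f,g,h] 3 = d := rfl
@[simp] lemma vec8_4 : ![a,b,c,d,e',f,g,h] 4 = e' := rfl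
@[simp] lemma vec8_5 : ![a,b,c,d,e',f,g,h] 5 = f := rfl
@[simp] lemma vec8_6 : ![a,b,c,d,e',f,g,h] 6 = g := rfl
@[simp] lemma vec8_7 : ![a,b,c,d,e',f,g,h] 7 = h := rfl
@[simp] lemma vec7_0 : ![a,b,c,d,e',f,g] 0 = a := rfl
@[simp] lemma vec7_1 : ![a,b,c,d,e',f,g] 1 = b := rfl
@[simp] lemma vec7_2 : ![a,b,c,d,e',f,g] 2 = c := rfl
@[simp] lemma vec7_3 : ![a,b,c,d,e',f,g] 3 = d := rfl
@[simp] lemma vec7_4 : ![a,b,c,d,e',f,g] 4 = e' := rfl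
@[simp] lemma vec7_5 : ![a,b,c,d,e',f,g] 5 = f := rfl
@[simp] lemma vec7_6 : ![a,b,c,d,e',f,g] 6 = g := rfl
@[simp] lemma vec8_0' (hk : (0:ℕ) < 8) : ![a,b,c,d,e',f,g,h] ⟨0, hk⟩ = a := rfl
@[simp] lemma vec8_1' (hk : (1:ℕ) < 8) : ![a,b,c,d,e',f,g,h] ⟨1, hk⟩ = b := rfl
@[simp] lemma vec8_2' (hk : (2:ℕ) < 8) : ![a,b,c,d,e',f,g,h] ⟨2, hk⟩ = c := rfl
@[simp] lemma vec8_3' (hk : (3:ℕ) < 8) : ![a,b,c,d,e',f,g,h] ⟨3, hk⟩ = d := rfl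
@[simp] lemma vec8_4' (hk : (4:ℕ) < 8) : ![a,b,c,d,e',f,g,h] ⟨4, hk⟩ = e' := rfl
@[simp] lemma vec8_5' (hk : (5:ℕ) < 8) : ![a,b,c,d,e',f,g,h] ⟨5, hk⟩ = f := rfl
@[simp] lemma vec8_6' (hk : (6:ℕ) < 8) : ![a,b,c,d,e',f,g,h] ⟨6, hk⟩ = g := rfl
@[simp] lemma vec8_7' (hk : (7:ℕ) < 8) : ![a,b,c,d,e',f,g,h] ⟨7, hk⟩ = h := rfl
end vecEval

lemma EE_mulVec (i j : Fin 8) (v : Fin 8 → ℝ) :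
    EE i j *ᵥ v = fun k => (if j = k then v i else 0) - (if i = k then v j else 0) := by
  funext k
  simp only [EE, Matrix.sub_mulVec, Pi.sub_apply, Matrix.mulVec, dotProduct,
    Matrix.single, Matrix.sub_apply, Matrix.of_apply, sub_mul,
    Finset.sum_sub_distrib]
  rw [sum_boole_mul8, sum_boole_mul8]

lemma e0_mulVec (v : Fin 8 → ℝ) : e 0 *ᵥ v = ![-v 7, -v 6, v 5, v 4, -v 3, -v 2, v 1, v 0] := by
  funext k; fin_cases k <;>
    simp (config := { decide := true }) [e, Matrix.add_mulVec, Matrix.sub_mulVec,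
      Matrix.neg_mulVec, EE_mulVec] <;> ring
lemma e1_mulVec (v : Fin 8 → ℝ) : e 1 *ᵥ v = ![v 6, -v 7, -v 4, v 5, v 2, -v 3, -v 0, v 1] := by
  funext k; fin_cases k <;>
    simp (config := { decide := true }) [e, Matrix.add_mulVec, Matrix.sub_mulVec,
      Matrix.neg_mulVec, EE_mulVec] <;> ring
lemma e2_mulVec (v : Fin 8 → ℝ) : e 2 *ᵥ v = ![v 5, -v 4, v 7, -v 6, v 1, -v 0, v 3, -v 2] := by
  funext k; fin_cases k <;>
    simp (config := { decide := true }) [e, Matrix.add_mulVec, Matrix.sub_mulVec,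
      Matrix.neg_mulVec, EE_mulVec] <;> ring
lemma e3_mulVec (v : Fin 8 → ℝ) : e 3 *ᵥ v = ![v 4, v 5, v 6, v 7, -v 0, -v 1, -v 2, -v 3] := by
  funext k; fin_cases k <;>
    simp (config := { decide := true }) [e, Matrix.add_mulVec, Matrix.sub_mulVec,
      Matrix.neg_mulVec, EE_mulVec] <;> ring
lemma e4_mulVec (v : Fin 8 → ℝ) : e 4 *ᵥ v = ![v 2, v 3, -v 0, -v 1, -v 6, -v 7, v 4, v 5] := by
  funext k; fin_cases k <;>
    simp (config := { decide := true }) [e, Matrix.add_mulVec, Matrix.sub_mulVec,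
      Matrix.neg_mulVec, EE_mulVec] <;> ring
lemma e5_mulVec (v : Fin 8 → ℝ) : e 5 *ᵥ v = ![-v 3, v 2, -v 1, v 0, v 7, -v 6, v 5, -v 4] := by
  funext k; fin_cases k <;>
    simp (config := { decide := true }) [e, Matrix.add_mulVec, Matrix.sub_mulVec,
      Matrix.neg_mulVec, EE_mulVec] <;> ring
lemma e6_mulVec (v : Fin 8 → ℝ) : e 6 *ᵥ v = ![-v 1, v 0, v 3, -v 2, v 5, -v 4, -v 7, v 6] := by
  funext k; fin_cases k <;>
    simp (config := { decide := true }) [e, Matrix.add_mulVec, Matrix.sub_mulVec,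
      Matrix.neg_mulVec, EE_mulVec] <;> ring

lemma Q1_act (v : Fin 8 → ℝ) :
    σ2 Q1f *ᵥ v = ![0, -4*v 2, 4*v 1, 0, 2*v 7, -2*v 6, 2*v 5, -2*v 4] := by
  rw [hQ1']
  rw [Matrix.add_mulVec, Matrix.sub_mulVec, Matrix.neg_mulVec, Matrix.smul_mulVec]
  rw [← Matrix.mulVec_mulVec, ← Matrix.mulVec_mulVec, ← Matrix.mulVec_mulVec]
  rw [e3_mulVec, e0_mulVec, e2_mulVec, e1_mulVec, e6_mulVec, e4_mulVec]
  funext k; fin_cases k <;>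
    simp only [Pi.add_apply, Pi.sub_apply, Pi.neg_apply, Pi.smul_apply, smul_eq_mul,
      vec8_0, vec8_1, vec8_2, vec8_3, vec8_4, vec8_5, vec8_6, vec8_7, vec8_0', vec8_1', vec8_2', vec8_3', vec8_4', vec8_5', vec8_6', vec8_7'] <;> ring

lemma Q2_act (v : Fin 8 → ℝ) :
    σ2 Q2f *ᵥ v = ![0, 4*v 3, 0, -4*v 1, 2*v 6, 2*v 7, -2*v 4, -2*v 5] := by
  rw [hQ2']
  rw [Matrix.add_mulVec, Matrix.add_mulVec, Matrix.neg_mulVec, Matrix.smul_mulVec]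
  rw [← Matrix.mulVec_mulVec, ← Matrix.mulVec_mulVec, ← Matrix.mulVec_mulVec]
  rw [e2_mulVec, e0_mulVec, e3_mulVec, e1_mulVec, e6_mulVec, e5_mulVec]
  funext k; fin_cases k <;>
    simp only [Pi.add_apply, Pi.sub_apply, Pi.neg_apply, Pi.smul_apply, smul_eq_mul,
      vec8_0, vec8_1, vec8_2, vec8_3, vec8_4, vec8_5, vec8_6, vec8_7, vec8_0', vec8_1', vec8_2', vec8_3', vec8_4', vec8_5', vec8_6', vec8_7'] <;> ring

lemma Q3_act (v : Fin 8 → ℝ) :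
    σ2 Q3f *ᵥ v = ![0, 0, -4*v 3, 4*v 2, 2*v 5, -2*v 4, -2*v 7, 2*v 6] := by
  rw [hQ3']
  rw [Matrix.sub_mulVec, Matrix.add_mulVec, Matrix.smul_mulVec]
  rw [← Matrix.mulVec_mulVec, ← Matrix.mulVec_mulVec, ← Matrix.mulVec_mulVec]
  rw [e1_mulVec, e0_mulVec, e3_mulVec, e2_mulVec, e5_mulVec, e4_mulVec]
  funext k; fin_cases k <;>
    simp only [Pi.add_apply, Pi.sub_apply, Pi.neg_apply, Pi.smul_apply, smul_eq_mul,
      vec8_0, vec8_1, vec8_2, vec8_3, vec8_4, vec8_5, vec8_6, vec8_7, vec8_0', vec8_1', vec8_2', vec8_3', vec8_4', vec8_5', vec8_6', vec8_7'] <;> ring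

/-- the spinors annihilated by σ(Q₁), σ(Q₂), σ(Q₃) are exactly ℝ·ψ₁. -/
theorem stmt_12 :
    {v : Fin 8 → ℝ | σ2 Q1f *ᵥ v = 0 ∧ σ2 Q2f *ᵥ v = 0 ∧ σ2 Q3f *ᵥ v = 0}
      = ↑(Submodule.span ℝ {ψ 0}) := by
  ext v
  simp only [Set.mem_setOf_eq, SetLike.mem_coe, Submodule.mem_span_singleton]
  constructor
  · rintro ⟨h1, h2, -⟩
    rw [Q1_act] at h1
    rw [Q2_act] at h2
    have a1 : v 1 = 0 := by have := congrFun h1 2; simp at this; linarith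
    have a2 : v 2 = 0 := by have := congrFun h1 1; simp at this; linarith
    have a3 : v 3 = 0 := by have := congrFun h2 1; simp at this; linarith
    have a4 : v 4 = 0 := by have := congrFun h1 7; simp at this; linarith
    have a5 : v 5 = 0 := by have := congrFun h1 6; simp at this; linarith
    have a6 : v 6 = 0 := by have := congrFun h1 5; simp at this; linarith
    have a7 : v 7 = 0 := by have := congrFun h1 4; simp at this; linarith
    refine ⟨v 0, ?_⟩
    funext k
    fin_cases k <;> simp [ψ, Pi.single_apply, a1, a2, a3, a4, a5, a6, a7]
  · rintro ⟨c, rfl⟩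
    refine ⟨?_, ?_, ?_⟩ <;> [rw [Q1_act]; rw [Q2_act]; rw [Q3_act]] <;>
      funext k <;> fin_cases k <;>
        simp only [vec8_0, vec8_1, vec8_2, vec8_3, vec8_4, vec8_5, vec8_6, vec8_7, vec8_0', vec8_1', vec8_2', vec8_3', vec8_4', vec8_5', vec8_6', vec8_7', Pi.zero_apply, Pi.smul_apply, ψ, smul_eq_mul] <;>
        simp (config := { decide := true }) [Pi.single_apply]
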